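/- Let m ≥ 1 and r ≥ 1 and let (N_1,…,N_r), N_i = [l_i, g_i] ⊆ {1,…,m+r}, be a lattice path presentation. The lattice path matroid M[N] is connected if and only if l_1 = 1, g_r = m + r, and l_{i+1} ≤ g_i for every i with 1 ≤ i < r. (These conditions say exactly that the two bounding lattice paths P and Q intersect only at (0,0) and (m,r).) -/

import Mathlib

open Set
open scoped Matroid

namespace LPM

variable {α β : Type*}

/-- `I` is a partial transversal of the set family `N`: there is an injection
matching each element of `I` to an index of a member of the family containing it. -/
def IsPT {ι : Type*} (N : ι → Set α) (I : Set α) : Prop :=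
  ∃ f : I → ι, Function.Injective f ∧ ∀ x : I, (x : α) ∈ N (f x)

/-- `I` is a (full) transversal of the set family `N`: there is a bijection
matching each element of `I` to an index of a member of the family containing it. -/
def IsT {ι : Type*} (N : ι → Set α) (I : Set α) : Prop :=
  ∃ f : I → ι, Function.Bijective f ∧ ∀ x : I, (x : α) ∈ N (f x)

/-- A lattice path presentation with nullity `m` and rank `r`: a sequence of
intervals `[l i, g i] ⊆ {1, …, m + r}` whose left endpoints strictly increase
and whose right endpoints strictly increase. -/
structure LPP (m r : ℕ) where
  l : Fin r → ℕ
  g : Fin r → ℕ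
  l_strictMono : StrictMono l
  g_strictMono : StrictMono g
  one_le_l : ∀ i, 1 ≤ l i
  l_le_g : ∀ i, l i ≤ g i
  g_le : ∀ i, g i ≤ m + r

/-- The intervals of a lattice path presentation. -/
def LPP.N {m r : ℕ} (P : LPP m r) (i : Fin r) : Set ℕ := Set.Icc (P.l i) (P.g i)

/-- `M` is the lattice path matroid `M[N]` of the presentation `P`: the ground set
is `{1, …, m + r}` and the independent sets are exactly the partial transversals
of the intervals of `P`. -/
def IsLPMOf {m r : ℕ} (P : LPP m r) (M : Matroid ℕ) : Prop :=
  M.E = Set.Icc 1 (m + r) ∧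
    ∀ I : Set ℕ, M.Indep I ↔ I ⊆ Set.Icc 1 (m + r) ∧ IsPT P.N I

/-- `M` is isomorphic to `M'`: there is a bijection between the ground sets
carrying independent sets to independent sets in both directions. -/
def IsoTo (M : Matroid α) (M' : Matroid β) : Prop :=
  ∃ f : α → β, Set.BijOn f M.E M'.E ∧ ∀ I ⊆ M.E, (M.Indep I ↔ M'.Indep (f '' I))

/-- A lattice path matroid: a matroid isomorphic to `M[N]` for some lattice path
presentation (presentations with `r = 0` give the rank-zero matroids). -/
def IsLPMatroid (M : Matroid α) : Prop :=
  ∃ (m r : ℕ) (P : LPP m r) (M₀ : Matroid ℕ), IsLPMOf P M₀ ∧ IsoTo M M₀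

/-- A circuit of a matroid: a minimal dependent subset of the ground set. -/
def Circuit (M : Matroid α) (C : Set α) : Prop :=
  C ⊆ M.E ∧ ¬ M.Indep C ∧ ∀ D : Set α, D ⊂ C → M.Indep D

/-- A matroid is connected if every two distinct elements of the ground set lie
in a common circuit. -/
def Connected (M : Matroid α) : Prop :=
  ∀ x ∈ M.E, ∀ y ∈ M.E, x ≠ y → ∃ C, Circuit M C ∧ x ∈ C ∧ y ∈ C

/-- The rank of a set in a matroid: the supremum of the cardinalities of its
independent subsets. -/
noncomputable def rk (M : Matroid α) (X : Set α) : ℕ :=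
  sSup {n | ∃ I, I ⊆ X ∧ M.Indep I ∧ I.ncard = n}

/-- A nontrivial connected flat: a flat that is dependent and whose restriction
is a connected matroid. -/
def NTConnFlat (M : Matroid α) (X : Set α) : Prop :=
  M.IsFlat X ∧ ¬ M.Indep X ∧ Connected (M ↾ X)

/-- Deletion of a set from a matroid. -/
def delete (M : Matroid α) (D : Set α) : Matroid α := M ↾ (M.E \ D)

/-- Contraction of a set in a matroid, defined via duality. -/
def contract (M : Matroid α) (C : Set α) : Matroid α := (delete M✶ C)✶

/-- `Minor M' M` means that `M'` is obtained from `M` by a sequence of deletions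
and contractions. -/
inductive Minor : Matroid α → Matroid α → Prop
  | refl (M : Matroid α) : Minor M M
  | del {M' M : Matroid α} (D : Set α) (h : Minor M' M) : Minor (delete M' D) M
  | con {M' M : Matroid α} (C : Set α) (h : Minor M' M) : Minor (contract M' C) M

end LPM

open LPM

section Aux

lemma isPT_mono {ι : Type*} {N : ι → Set ℕ} {I J : Set ℕ} (hJI : J ⊆ I) (h : IsPT N I) :
    IsPT N J := by
  obtain ⟨f, hinj, hmem⟩ := h
  refine ⟨fun z => f ⟨z.1, hJI z.2⟩, fun a b hab => ?_, fun z => hmem _⟩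
  have h2 : (a : ℕ) = (b : ℕ) := Subtype.mk_eq_mk.mp (hinj hab)
  exact Subtype.ext h2

/-- total versions of the endpoint functions -/
def Lf {m r : ℕ} (P : LPP m r) (n : ℕ) : ℕ := if h : n < r then P.l ⟨n, h⟩ else 0
def Gf {m r : ℕ} (P : LPP m r) (n : ℕ) : ℕ := if h : n < r then P.g ⟨n, h⟩ else 0

lemma Lf_eq {m r : ℕ} (P : LPP m r) {n : ℕ} (h : n < r) : Lf P n = P.l ⟨n, h⟩ := dif_pos h
lemma Gf_eq {m r : ℕ} (P : LPP m r) {n : ℕ} (h : n < r) : Gf P n = P.g ⟨n, h⟩ := dif_pos h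

lemma Lf_mono {m r : ℕ} (P : LPP m r) {a b : ℕ} (hab : a ≤ b) (hb : b < r) :
    Lf P a ≤ Lf P b := by
  rw [Lf_eq P (lt_of_le_of_lt hab hb), Lf_eq P hb]
  exact P.l_strictMono.monotone (by exact hab)

lemma Lf_strict {m r : ℕ} (P : LPP m r) {a b : ℕ} (hab : a < b) (hb : b < r) :
    Lf P a < Lf P b := by
  rw [Lf_eq P (lt_trans hab hb), Lf_eq P hb]
  exact P.l_strictMono (by exact hab)

lemma Gf_mono {m r : ℕ} (P : LPP m r) {a b : ℕ} (hab : a ≤ b) (hb : b < r) :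
    Gf P a ≤ Gf P b := by
  rw [Gf_eq P (lt_of_le_of_lt hab hb), Gf_eq P hb]
  exact P.g_strictMono.monotone (by exact hab)

lemma Gf_strict {m r : ℕ} (P : LPP m r) {a b : ℕ} (hab : a < b) (hb : b < r) :
    Gf P a < Gf P b := by
  rw [Gf_eq P (lt_trans hab hb), Gf_eq P hb]
  exact P.g_strictMono (by exact hab)

lemma Lf_le_Gf {m r : ℕ} (P : LPP m r) {n : ℕ} (h : n < r) : Lf P n ≤ Gf P n := by
  rw [Lf_eq P h, Gf_eq P h]; exact P.l_le_g _

lemma one_le_Lf {m r : ℕ} (P : LPP m r) {n : ℕ} (h : n < r) : 1 ≤ Lf P n := by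
  rw [Lf_eq P h]; exact P.one_le_l _

lemma Gf_le {m r : ℕ} (P : LPP m r) {n : ℕ} (h : n < r) : Gf P n ≤ m + r := by
  rw [Gf_eq P h]; exact P.g_le _

end Aux

section Chain

variable {m r : ℕ} (P : LPP m r) (M : Matroid ℕ)

/-- A strictly increasing chain `c 0 < c 1 < ⋯ < c k` such that consecutive
elements `c t, c (t+1)` both lie in the interval `N (i₀ + t)`, the element `c 0`
lies in no interval with index `< i₀` and `c k` lies in no interval with index
`≥ i₀ + k`, forms a circuit of the lattice path matroid. -/
lemma circuit_of_chain (hM : IsLPMOf P M) (k i₀ : ℕ) (c : ℕ → ℕ) (hk : 1 ≤ k) (hkr : i₀ + k ≤ r)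
    (hmono : ∀ t, t < k → c t < c (t + 1))
    (hpair : ∀ t, t < k → Lf P (i₀ + t) ≤ c t ∧ c (t + 1) ≤ Gf P (i₀ + t))
    (hlow : ∀ i, i < i₀ → Gf P i < c 0)
    (hhigh : ∀ i, i₀ + k ≤ i → i < r → c k < Lf P i) :
    Circuit M (c '' Set.Iic k) := by
  have cmono : ∀ a b, a ≤ b → b ≤ k → c a ≤ c b := by
    intro a b hab hbk
    induction b with
    | zero => rw [Nat.le_zero.mp hab]
    | succ n ih =>
      rcases Nat.lt_or_ge a (n + 1) with h | h
      · exact le_trans (ih (by omega) (by omega)) (le_of_lt (hmono n (by omega)))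
      · have : a = n + 1 := by omega
        subst this; rfl
  have cstrict : ∀ a b, a < b → b ≤ k → c a < c b := by
    intro a b hab hbk
    have h1 : c a ≤ c (b - 1) := cmono a (b - 1) (by omega) (by omega)
    have h2 : c (b - 1) < c (b - 1 + 1) := hmono (b - 1) (by omega)
    have : b - 1 + 1 = b := by omega
    rw [this] at h2
    exact lt_of_le_of_lt h1 h2
  have cinj : ∀ a b, a ≤ k → b ≤ k → c a = c b → a = b := by
    intro a b ha hb hab
    by_contra hne
    rcases Nat.lt_or_ge a b with h | h
    · exact absurd hab (ne_of_lt (cstrict a b h hb))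
    · exact absurd hab.symm (ne_of_lt (cstrict b a (by omega) ha))
  -- chain elements lie between `c 0` and `c k`, hence in the ground set
  have hc0 : Lf P i₀ ≤ c 0 := by
    have := (hpair 0 hk).1; simpa using this
  have hck : c k ≤ Gf P (i₀ + (k - 1)) := by
    have := (hpair (k - 1) (by omega)).2
    have e : k - 1 + 1 = k := by omega
    rwa [e] at this
  have hsub : c '' Set.Iic k ⊆ Set.Icc 1 (m + r) := by
    rintro z ⟨t, htk, rfl⟩
    simp only [Set.mem_Iic] at htk
    constructor
    · calc 1 ≤ Lf P i₀ := one_le_Lf P (by omega)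
        _ ≤ c 0 := hc0
        _ ≤ c t := cmono 0 t (by omega) htk
    · calc c t ≤ c k := cmono t k htk le_rfl
        _ ≤ Gf P (i₀ + (k - 1)) := hck
        _ ≤ m + r := Gf_le P (by omega)
  refine ⟨by rw [hM.1]; exact hsub, ?_, ?_⟩
  · -- dependence: k + 1 elements, only k available intervals
    intro hInd
    obtain ⟨-, f, hinj, hmem⟩ := (hM.2 _).mp hInd
    have hmemC : ∀ t : Fin (k + 1), c (t : ℕ) ∈ c '' Set.Iic k :=
      fun t => ⟨t, by simpa using Nat.lt_succ_iff.mp t.isLt, rfl⟩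
    set e : Fin (k + 1) → ↥(c '' Set.Iic k) := fun t => ⟨c t, hmemC t⟩ with he
    have hrange : ∀ t : Fin (k + 1), i₀ ≤ (f (e t) : ℕ) ∧ ((f (e t)) : ℕ) < i₀ + k := by
      intro t
      have hm := hmem (e t)
      have hmm : c (t : ℕ) ∈ Set.Icc (P.l (f (e t))) (P.g (f (e t))) := hm
      obtain ⟨h1, h2⟩ := hmm
      have hfr : ((f (e t)) : ℕ) < r := (f (e t)).isLt
      constructor
      · by_contra hcon
        have : Gf P (f (e t)) < c 0 := hlow _ (by omega)
        rw [Gf_eq P hfr] at this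
        have : P.g (f (e t)) < c (t : ℕ) :=
          lt_of_lt_of_le this (cmono 0 t (by omega) (by omega))
        omega
      · by_contra hcon
        have : c k < Lf P (f (e t)) := hhigh _ (by omega) hfr
        rw [Lf_eq P hfr] at this
        have : c (t : ℕ) < P.l (f (e t)) :=
          lt_of_le_of_lt (cmono t k (by omega) le_rfl) this
        omega
    set F : Fin (k + 1) → Fin k := fun t => ⟨(f (e t) : ℕ) - i₀, by
      have := hrange t; omega⟩ with hF
    have hFinj : Function.Injective F := by
      intro a b hab
      have h1 := hrange a
      have h2 := hrange b
      have hv : ((f (e a)) : ℕ) - i₀ = ((f (e b)) : ℕ) - i₀ := congrArg Fin.val hab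
      have hv2 : ((f (e a)) : ℕ) = ((f (e b)) : ℕ) := by omega
      have : f (e a) = f (e b) := Fin.ext hv2
      have hee : e a = e b := hinj this
      have : c (a : ℕ) = c (b : ℕ) := congrArg Subtype.val hee
      exact Fin.ext (cinj a b (by omega) (by omega) this)
    have := Fintype.card_le_of_injective F hFinj
    simp only [Fintype.card_fin] at this
    omega
  · -- minimality: every proper subset is independent
    intro D hD
    obtain ⟨z, hzC, hzD⟩ := Set.exists_of_ssubset hD
    obtain ⟨j, hjk, hjz⟩ := hzC
    simp only [Set.mem_Iic] at hjk
    have hDsub : D ⊆ c '' Set.Iic k \ {c j} := by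
      intro w hw
      refine ⟨hD.subset hw, ?_⟩
      simp only [Set.mem_singleton_iff]
      rintro rfl
      rw [hjz] at hw
      exact hzD hw
    refine (hM.2 D).mpr ⟨(hD.subset.trans hsub), isPT_mono hDsub ?_⟩
    -- the chain minus one element is a partial transversal
    have hex : ∀ z : ↥(c '' Set.Iic k \ {c j}), ∃ t, t ≤ k ∧ t ≠ j ∧ c t = (z : ℕ) := by
      rintro ⟨z, ⟨t, htk, rfl⟩, hz⟩
      simp only [Set.mem_Iic] at htk
      refine ⟨t, htk, ?_, rfl⟩
      rintro rfl
      exact hz rfl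
    choose T hTk hTj hTc using hex
    refine ⟨fun z => ⟨if T z < j then i₀ + T z else i₀ + (T z - 1), ?_⟩, ?_, ?_⟩
    · have h1 := hTk z; have h2 := hTj z
      split <;> omega
    · intro a b hab
      have hv : (if T a < j then i₀ + T a else i₀ + (T a - 1)) =
          (if T b < j then i₀ + T b else i₀ + (T b - 1)) := congrArg Fin.val hab
      have hTa := hTk a; have hTb := hTk b
      have hja := hTj a; have hjb := hTj b
      have : T a = T b := by
        rcases Nat.lt_or_ge (T a) j with h1 | h1 <;> rcases Nat.lt_or_ge (T b) j with h2 | h2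
        · rw [if_pos h1, if_pos h2] at hv; omega
        · rw [if_pos h1, if_neg (by omega)] at hv; omega
        · rw [if_neg (by omega), if_pos h2] at hv; omega
        · rw [if_neg (by omega), if_neg (by omega)] at hv; omega
      have : c (T a) = c (T b) := by rw [this]
      have : (a : ℕ) = (b : ℕ) := by rw [← hTc a, ← hTc b, this]
      exact Subtype.ext this
    · intro z
      have hTzk := hTk z; have hTzj := hTj z
      rcases Nat.lt_or_ge (T z) j with h1 | h1
      · simp only [if_pos h1]
        have htk' : T z < k := by omega
        have hp := hpair (T z) htk'
        have : (z : ℕ) ∈ Set.Icc (Lf P (i₀ + T z)) (Gf P (i₀ + T z)) := by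
          constructor
          · rw [← hTc z]; exact hp.1
          · rw [← hTc z]
            exact le_trans (le_of_lt (hmono (T z) htk')) hp.2
        show (z : ℕ) ∈ Set.Icc (P.l _) (P.g _)
        rwa [Lf_eq P (by omega : i₀ + T z < r), Gf_eq P (by omega : i₀ + T z < r)] at this
      · have h1' : j < T z := by omega
        simp only [if_neg (by omega : ¬ T z < j)]
        have htk' : T z - 1 < k := by omega
        have hp := hpair (T z - 1) htk'
        have he : T z - 1 + 1 = T z := by omega
        have : (z : ℕ) ∈ Set.Icc (Lf P (i₀ + (T z - 1))) (Gf P (i₀ + (T z - 1))) := by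
          constructor
          · rw [← hTc z]
            exact le_trans hp.1 (cmono (T z - 1) (T z) (by omega) hTzk)
          · rw [← hTc z, ← he]; exact hp.2
        show (z : ℕ) ∈ Set.Icc (P.l _) (P.g _)
        rwa [Lf_eq P (by omega : i₀ + (T z - 1) < r),
          Gf_eq P (by omega : i₀ + (T z - 1) < r)] at this

end Chain

section Key

lemma key {m r : ℕ} (hm : 1 ≤ m) (hr : 1 ≤ r) (P : LPP m r) (M : Matroid ℕ)
    (hM : IsLPMOf P M)
    (hl1 : Lf P 0 = 1) (hgr : Gf P (r - 1) = m + r)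
    (hov : ∀ n, n + 1 < r → Lf P (n + 1) ≤ Gf P n)
    (x y : ℕ) (hx : 1 ≤ x) (hy : y ≤ m + r) (hxy : x < y) :
    ∃ C, Circuit M C ∧ x ∈ C ∧ y ∈ C := by
  classical
  -- s : minimal index with x ≤ g s
  have hsex : ∃ n, n < r ∧ x ≤ Gf P n := ⟨r - 1, by omega, by rw [hgr]; omega⟩
  set s := Nat.find hsex with hs_def
  obtain ⟨hs_lt, hs_le⟩ : s < r ∧ x ≤ Gf P s := Nat.find_spec hsex
  have hs_min : ∀ i, i < s → i < r → Gf P i < x := by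
    intro i his hir
    have := Nat.find_min hsex his
    push_neg at this
    exact this hir
  -- q' : minimal index with y ≤ g q'
  have hqex : ∃ n, n < r ∧ y ≤ Gf P n := ⟨r - 1, by omega, by rw [hgr]; omega⟩
  set q' := Nat.find hqex with hq_def
  obtain ⟨hq_lt, hq_le⟩ : q' < r ∧ y ≤ Gf P q' := Nat.find_spec hqex
  have hq_min : ∀ i, i < q' → i < r → Gf P i < y := by
    intro i hiq hir
    have := Nat.find_min hqex hiq
    push_neg at this
    exact this hir
  have hsq : s ≤ q' := Nat.find_min' hsex ⟨hq_lt, le_trans (le_of_lt hxy) hq_le⟩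
  -- p' : maximal index with l p' ≤ y
  set p' := Nat.findGreatest (fun n => n < r ∧ Lf P n ≤ y) (r - 1) with hp_def
  have hp_spec : p' < r ∧ Lf P p' ≤ y :=
    Nat.findGreatest_spec (P := fun n => n < r ∧ Lf P n ≤ y) (m := 0) (by omega) ⟨by omega, by rw [hl1]; omega⟩
  have hp_max : ∀ i, p' < i → i < r → y < Lf P i := by
    intro i hpi hir
    have := Nat.findGreatest_is_greatest
      (P := fun n => n < r ∧ Lf P n ≤ y) (n := r - 1) hpi (by omega)
    simp only [not_and, not_le] at this
    exact this hir
  have hqp : q' ≤ p' := by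
    -- l q' ≤ y , so q' is a candidate
    have hlq : Lf P q' ≤ y := by
      rcases Nat.eq_zero_or_pos q' with h0 | h0
      · rw [h0, hl1]; omega
      · have := hov (q' - 1) (by omega)
        have h2 := hq_min (q' - 1) (by omega) (by omega)
        have e : q' - 1 + 1 = q' := by omega
        rw [e] at this
        omega
    exact Nat.le_findGreatest (by omega) ⟨hq_lt, hlq⟩
  have hls : Lf P s ≤ x := by
    rcases Nat.eq_zero_or_pos s with h0 | h0
    · rw [h0, hl1]; omega
    · have := hov (s - 1) (by omega)
      have h2 := hs_min (s - 1) (by omega) (by omega)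
      have e : s - 1 + 1 = s := by omega
      rw [e] at this
      omega
  rcases lt_or_eq_of_le hs_le with hA | hB
  · -- Case A : x < g s
    set ty := q' - s + 1 with hty
    set c : ℕ → ℕ := fun t => if t = 0 then x else if t = ty then y else Gf P (s + t - 1)
      with hc
    have hc0 : c 0 = x := by simp only [hc, if_pos rfl]
    have hcy : c ty = y := by
      simp only [hc]
      rw [if_neg (by omega : ¬ ty = 0)]
      simp
    have hcg : ∀ t, t ≠ 0 → t ≠ ty → c t = Gf P (s + t - 1) := by
      intro t h1 h2
      simp only [hc]
      rw [if_neg h1, if_neg h2]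
    set k := if p' = q' then ty else r - s with hk
    have hty_le : ty ≤ k := by rw [hk]; split <;> omega
    have hk1 : 1 ≤ k := by omega
    have hkr : s + k ≤ r := by rw [hk]; split <;> omega
    have hmono : ∀ t, t < k → c t < c (t + 1) := by
      intro t ht
      rcases Nat.eq_zero_or_pos t with rfl | htpos
      · rcases eq_or_ne ty 1 with h1 | h1
        · have h2 : c (0 + 1) = y := by rw [show (0 + 1 : ℕ) = ty by omega]; exact hcy
          rw [hc0, h2]
          exact hxy
        · have h2 : c (0 + 1) = Gf P s := by
            rw [hcg (0 + 1) one_ne_zero (by omega)]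
            congr 1 <;> omega
          rw [hc0, h2]; exact hA
      · rcases eq_or_ne t ty with rfl | hne
        · have h2 : c (ty + 1) = Gf P (s + ty) := by
            rw [hcg _ (by omega) (by omega)]
            congr 1 <;> omega
          rw [hcy, h2]
          have h3 : Gf P q' < Gf P (s + ty) := Gf_strict P (by omega) (by omega)
          omega
        · have h2 : c t = Gf P (s + t - 1) := hcg t (by omega) hne
          rcases eq_or_ne (t + 1) ty with he | hne2
          · have h3 : c (t + 1) = y := by rw [he]; exact hcy
            rw [h2, h3]
            exact hq_min (s + t - 1) (by omega) (by omega)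
          · have h3 : c (t + 1) = Gf P (s + t) := by
              rw [hcg _ (by omega) hne2]
              congr 1 <;> omega
            rw [h2, h3]
            exact Gf_strict P (by omega) (by omega)
    have hpair : ∀ t, t < k → Lf P (s + t) ≤ c t ∧ c (t + 1) ≤ Gf P (s + t) := by
      intro t ht
      constructor
      · rcases Nat.eq_zero_or_pos t with rfl | htpos
        · rw [hc0]; exact hls
        · rcases eq_or_ne t ty with rfl | hne
          · -- t = ty < k forces p' ≠ q'
            have hpq : q' < p' := by
              by_cases hpq : p' = q'
              · exfalso; rw [hk, if_pos hpq] at ht; omega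
              · omega
            rw [hcy]
            have h4 : Lf P (s + ty) ≤ Lf P p' := Lf_mono P (by omega) (by omega)
            omega
          · rw [hcg t (by omega) hne]
            have h5 := hov (s + t - 1) (by omega)
            have e : s + t - 1 + 1 = s + t := by omega
            rwa [e] at h5
      · rcases eq_or_ne (t + 1) ty with he | hne2
        · have h3 : c (t + 1) = y := by rw [he]; exact hcy
          rw [h3, show s + t = q' by omega]
          exact hq_le
        · rw [hcg (t + 1) (by omega) hne2]
          exact le_of_eq (by rw [show s + (t + 1) - 1 = s + t by omega])
    have hlow : ∀ i, i < s → Gf P i < c 0 := by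
      intro i hi
      rw [hc0]
      exact hs_min i hi (by omega)
    have hhigh : ∀ i, s + k ≤ i → i < r → c k < Lf P i := by
      intro i hi hir
      by_cases hpq : p' = q'
      · have hke : k = ty := by rw [hk, if_pos hpq]
        rw [hke, hcy]
        exact hp_max i (by omega) hir
      · exfalso
        rw [hk, if_neg hpq] at hi
        omega
    exact ⟨c '' Set.Iic k, circuit_of_chain P M hM k s c hk1 hkr hmono hpair hlow hhigh,
      ⟨0, Set.mem_Iic.mpr (Nat.zero_le k), hc0⟩, ⟨ty, Set.mem_Iic.mpr hty_le, hcy⟩⟩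
  · -- Case B : x = g s
    have hsq2 : s < q' := by
      rcases Nat.lt_or_ge s q' with h | h
      · exact h
      · exfalso
        have := Gf_mono P h (by omega)
        omega
    have hlsx : Lf P s < x := by
      by_contra hcon
      push_neg at hcon
      have h1 : Lf P s ≤ Gf P s := Lf_le_Gf P (by omega)
      have h2 := hov s (by omega)
      have h3 := Lf_strict P ((show s < s + 1 by omega)) (by omega)
      omega
    have hls1x : Lf P (s + 1) ≤ x := by
      have := hov s (by omega)
      omega
    set c : ℕ → ℕ := fun t => if t ≤ s then Lf P t else if t = s + 1 then x
      else if t = q' + 1 then y else Gf P (t - 1) with hc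
    have hcl : ∀ t, t ≤ s → c t = Lf P t := by
      intro t h
      simp only [hc]
      rw [if_pos h]
    have hcx : c (s + 1) = x := by
      simp only [hc]
      rw [if_neg (by omega)]
      simp
    have hcy : c (q' + 1) = y := by
      simp only [hc]
      rw [if_neg (by omega), if_neg (by omega)]
      simp
    have hcg : ∀ t, s + 1 < t → t ≠ q' + 1 → c t = Gf P (t - 1) := by
      intro t h1 h2
      simp only [hc]
      rw [if_neg (by omega), if_neg (by omega), if_neg h2]
    set k := if p' = q' then q' + 1 else r with hk
    have hq1k : q' + 1 ≤ k := by rw [hk]; split <;> omega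
    have hs1k : s + 1 ≤ k := by omega
    have hk1 : 1 ≤ k := by omega
    have hkr : 0 + k ≤ r := by rw [hk]; split <;> omega
    have hq1k' : ¬ (p' = q') → q' + 1 < k := by
      intro h; rw [hk, if_neg h]; omega
    have hmono : ∀ t, t < k → c t < c (t + 1) := by
      intro t ht
      rcases Nat.lt_or_ge t s with h1 | h1
      · rw [hcl t (by omega), hcl (t + 1) (by omega)]
        exact Lf_strict P ((show t < t + 1 by omega)) (by omega)
      · rcases eq_or_ne t s with rfl | h2
        · rw [hcl s le_rfl, hcx]
          exact hlsx
        · rcases eq_or_ne t (s + 1) with rfl | h3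
          · rw [hcx]
            rcases eq_or_ne (s + 1 + 1) (q' + 1) with he | hne
            · rw [show c (s + 1 + 1) = y from by rw [he]; exact hcy]
              exact hxy
            · rw [hcg (s + 1 + 1) (by omega) hne,
                show s + 1 + 1 - 1 = s + 1 by omega]
              have := Gf_strict P ((show s < s + 1 by omega)) (by omega)
              omega
          · rcases eq_or_ne t (q' + 1) with rfl | h4
            · rw [hcy, hcg (q' + 1 + 1) (by omega) (by omega),
                show q' + 1 + 1 - 1 = q' + 1 by omega]
              have := Gf_strict P ((show q' < q' + 1 by omega)) (by omega)
              omega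
            · rw [hcg t (by omega) h4]
              rcases eq_or_ne (t + 1) (q' + 1) with he | hne
              · rw [show c (t + 1) = y from by rw [he]; exact hcy]
                exact hq_min (t - 1) (by omega) (by omega)
              · rw [hcg (t + 1) (by omega) hne, show t + 1 - 1 = t by omega]
                exact Gf_strict P (by omega) (by omega)
    have hpair : ∀ t, t < k → Lf P (0 + t) ≤ c t ∧ c (t + 1) ≤ Gf P (0 + t) := by
      intro t ht
      rw [Nat.zero_add]
      constructor
      · rcases le_or_gt t s with h1 | h1
        · rw [hcl t h1]
        · rcases eq_or_ne t (s + 1) with rfl | h2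
          · rw [hcx]; exact hls1x
          · rcases eq_or_ne t (q' + 1) with rfl | h3
            · -- t = q' + 1 < k forces p' ≠ q', hence q' < p'
              have hpq : q' < p' := by
                by_cases hpq : p' = q'
                · exfalso; rw [hk, if_pos hpq] at ht; omega
                · omega
              rw [hcy]
              have h4 : Lf P (q' + 1) ≤ Lf P p' := Lf_mono P (by omega) (by omega)
              omega
            · rw [hcg t (by omega) h3]
              have h5 := hov (t - 1) (by omega)
              have e : t - 1 + 1 = t := by omega
              rwa [e] at h5
      · rcases le_or_gt (t + 1) s with h1 | h1
        · rw [hcl (t + 1) h1]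
          exact hov t (by omega)
        · rcases eq_or_ne (t + 1) (s + 1) with he | h2
          · rw [show c (t + 1) = x from by rw [he]; exact hcx, show t = s by omega]
            exact le_of_eq hB
          · rcases eq_or_ne (t + 1) (q' + 1) with he | h3
            · rw [show c (t + 1) = y from by rw [he]; exact hcy, show t = q' by omega]
              exact hq_le
            · rw [hcg (t + 1) (by omega) h3, show t + 1 - 1 = t by omega]
    have hlow : ∀ i, i < 0 → Gf P i < c 0 := by
      intro i hi
      exact absurd hi (Nat.not_lt_zero i)
    have hhigh : ∀ i, 0 + k ≤ i → i < r → c k < Lf P i := by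
      intro i hi hir
      by_cases hpq : p' = q'
      · have hke : k = q' + 1 := by rw [hk, if_pos hpq]
        rw [hke, hcy]
        exact hp_max i (by omega) hir
      · exfalso
        rw [hk, if_neg hpq] at hi
        omega
    exact ⟨c '' Set.Iic k, circuit_of_chain P M hM k 0 c hk1 hkr hmono hpair hlow hhigh,
      ⟨s + 1, Set.mem_Iic.mpr hs1k, hcx⟩, ⟨q' + 1, Set.mem_Iic.mpr hq1k, hcy⟩⟩

end Key

open LPM in
/-- The lattice path matroid `M[N]` (with `m, r ≥ 1`) is
connected iff `l 1 = 1`, `g r = m + r`, and `l (i+1) ≤ g i` for `1 ≤ i < r`. -/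
theorem stmt8 {m r : ℕ} (hm : 1 ≤ m) (hr : 1 ≤ r) (P : LPP m r)
    (M : Matroid ℕ) (hM : IsLPMOf P M) :
    Connected M ↔
      (P.l ⟨0, by omega⟩ = 1 ∧ P.g ⟨r - 1, by omega⟩ = m + r ∧
        ∀ i j : Fin r, (j : ℕ) = (i : ℕ) + 1 → P.l j ≤ P.g i) := by
  have hE : M.E = Set.Icc 1 (m + r) := hM.1
  constructor
  · intro hconn
    have h1E : (1 : ℕ) ∈ M.E := by rw [hE]; exact ⟨le_rfl, by omega⟩
    have hmrE : (m + r : ℕ) ∈ M.E := by rw [hE]; exact ⟨by omega, le_rfl⟩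
    refine ⟨?_, ?_, ?_⟩
    · -- l 0 = 1
      by_contra h
      obtain ⟨C, hC, h1C, h2C⟩ := hconn 1 h1E (m + r) hmrE (by omega)
      have hss : ({1} : Set ℕ) ⊂ C := by
        rw [Set.ssubset_iff_of_subset (Set.singleton_subset_iff.mpr h1C)]
        exact ⟨m + r, h2C, by simp; omega⟩
      obtain ⟨-, f, -, hmem⟩ := (hM.2 _).mp (hC.2.2 _ hss)
      have hm1 := hmem ⟨1, rfl⟩
      obtain ⟨hww, -⟩ := hm1
      have hww' : P.l (f ⟨1, rfl⟩) ≤ 1 := hww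
      have h0 : P.l ⟨0, by omega⟩ ≤ P.l (f ⟨1, rfl⟩) :=
        P.l_strictMono.monotone (by simp [Fin.le_def])
      have h1 : 1 ≤ P.l ⟨0, by omega⟩ := P.one_le_l _
      omega
    · -- g (r-1) = m + r
      by_contra h
      have hle : P.g ⟨r - 1, by omega⟩ ≤ m + r := P.g_le _
      obtain ⟨C, hC, h1C, h2C⟩ := hconn 1 h1E (m + r) hmrE (by omega)
      have hss : ({m + r} : Set ℕ) ⊂ C := by
        rw [Set.ssubset_iff_of_subset (Set.singleton_subset_iff.mpr h2C)]
        exact ⟨1, h1C, by simp; omega⟩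
      obtain ⟨-, f, -, hmem⟩ := (hM.2 _).mp (hC.2.2 _ hss)
      have hm1 := hmem ⟨m + r, rfl⟩
      obtain ⟨-, hww⟩ := hm1
      have hww' : m + r ≤ P.g (f ⟨m + r, rfl⟩) := hww
      have h0 : P.g (f ⟨m + r, rfl⟩) ≤ P.g ⟨r - 1, by omega⟩ :=
        P.g_strictMono.monotone (by simp [Fin.le_def]; omega)
      omega
    · -- overlap
      intro i j hij
      by_contra h
      push_neg at h
      set a := P.g i with ha
      set b := P.l j with hb
      have haE : a ∈ M.E := by
        rw [hE]
        exact ⟨le_trans (P.one_le_l i) (P.l_le_g i), P.g_le i⟩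
      have hbE : b ∈ M.E := by
        rw [hE]
        exact ⟨P.one_le_l j, le_trans (P.l_le_g j) (P.g_le j)⟩
      obtain ⟨C, hC, haC, hbC⟩ := hconn a haE b hbE (by omega)
      -- no element of C lies strictly between a and b
      have hgap : ∀ z ∈ C, z ≤ a ∨ b ≤ z := by
        intro z hz
        by_contra hcon
        push_neg at hcon
        obtain ⟨hza, hzb⟩ := hcon
        have hss : ({z} : Set ℕ) ⊂ C := by
          rw [Set.ssubset_iff_of_subset (Set.singleton_subset_iff.mpr hz)]
          exact ⟨a, haC, by simp; omega⟩
        obtain ⟨-, f, -, hmem⟩ := (hM.2 _).mp (hC.2.2 _ hss)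
        obtain ⟨hw1, hw2⟩ := hmem ⟨z, rfl⟩
        have hw1' : P.l (f ⟨z, rfl⟩) ≤ z := hw1
        have hw2' : z ≤ P.g (f ⟨z, rfl⟩) := hw2
        set i' := f ⟨z, rfl⟩ with hi'
        rcases Nat.lt_or_ge (i' : ℕ) (j : ℕ) with hc1 | hc1
        · -- i' ≤ i : g i' ≤ g i = a < z
          have : P.g i' ≤ P.g i := P.g_strictMono.monotone (by rw [Fin.le_def]; omega)
          omega
        · -- i' ≥ j : l i' ≥ l j = b > z
          have : P.l j ≤ P.l i' := P.l_strictMono.monotone (by rw [Fin.le_def]; omega)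
          omega
      -- split C into the two sides
      have hC1ss : {w ∈ C | w ≤ a} ⊂ C := by
        rw [Set.ssubset_iff_of_subset (Set.sep_subset _ _)]
        exact ⟨b, hbC, by intro hcon; have := hcon.2; omega⟩
      have hC2ss : {w ∈ C | b ≤ w} ⊂ C := by
        rw [Set.ssubset_iff_of_subset (Set.sep_subset _ _)]
        exact ⟨a, haC, by intro hcon; have := hcon.2; omega⟩
      obtain ⟨-, f1, hinj1, hmem1⟩ := (hM.2 _).mp (hC.2.2 _ hC1ss)
      obtain ⟨-, f2, hinj2, hmem2⟩ := (hM.2 _).mp (hC.2.2 _ hC2ss)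
      -- f1 has values ≤ i, f2 has values ≥ j
      have hf1 : ∀ w, ((f1 w : Fin r) : ℕ) < (j : ℕ) := by
        intro w
        obtain ⟨h1, h2⟩ := hmem1 w
        have hwa : (w : ℕ) ≤ a := w.2.2
        by_contra hcon
        have : P.l j ≤ P.l (f1 w) := P.l_strictMono.monotone (by rw [Fin.le_def]; omega)
        omega
      have hf2 : ∀ w, (j : ℕ) ≤ ((f2 w : Fin r) : ℕ) := by
        intro w
        obtain ⟨h1, h2⟩ := hmem2 w
        have hwb : b ≤ (w : ℕ) := w.2.2
        by_contra hcon
        have : P.g (f2 w) ≤ P.g i := P.g_strictMono.monotone (by rw [Fin.le_def]; omega)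
        omega
      have hIndC : M.Indep C := by
        refine (hM.2 C).mpr ⟨by rw [← hE]; exact hC.1, ?_⟩
        refine ⟨fun w => if h : (w : ℕ) ≤ a then f1 ⟨w, ⟨w.2, h⟩⟩
          else f2 ⟨w, ⟨w.2, by rcases hgap w w.2 with h' | h'; omega; exact h'⟩⟩, ?_, ?_⟩
        · intro u v huv
          by_cases hu : (u : ℕ) ≤ a <;> by_cases hv : (v : ℕ) ≤ a
          · simp only [dif_pos hu, dif_pos hv] at huv
            have := hinj1 huv
            exact Subtype.ext (Subtype.mk_eq_mk.mp this)
          · simp only [dif_pos hu, dif_neg hv] at huv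
            exfalso
            have h1 := hf1 ⟨u, ⟨u.2, hu⟩⟩
            have h2 := hf2 ⟨v, ⟨v.2, by rcases hgap v v.2 with h' | h'; omega; exact h'⟩⟩
            rw [huv] at h1
            omega
          · simp only [dif_neg hu, dif_pos hv] at huv
            exfalso
            have h1 := hf1 ⟨v, ⟨v.2, hv⟩⟩
            have h2 := hf2 ⟨u, ⟨u.2, by rcases hgap u u.2 with h' | h'; omega; exact h'⟩⟩
            rw [huv] at h2
            omega
          · simp only [dif_neg hu, dif_neg hv] at huv
            have := hinj2 huv
            exact Subtype.ext (Subtype.mk_eq_mk.mp this)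
        · intro w
          by_cases hw : (w : ℕ) ≤ a
          · simp only [dif_pos hw]
            exact hmem1 _
          · simp only [dif_neg hw]
            exact hmem2 _
      exact hC.2.1 hIndC
  · rintro ⟨hl1, hgr, hov⟩
    have hl1' : Lf P 0 = 1 := by rw [Lf_eq P (by omega)]; exact hl1
    have hgr' : Gf P (r - 1) = m + r := by rw [Gf_eq P (by omega)]; exact hgr
    have hov' : ∀ n, n + 1 < r → Lf P (n + 1) ≤ Gf P n := by
      intro n hn
      rw [Lf_eq P hn, Gf_eq P (by omega)]
      exact hov ⟨n, by omega⟩ ⟨n + 1, hn⟩ rfl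
    intro x hx y hy hxy
    rw [hE] at hx hy
    rcases lt_or_gt_of_ne hxy with h | h
    · exact key hm hr P M hM hl1' hgr' hov' x y hx.1 hy.2 h
    · obtain ⟨C, hC, hyC, hxC⟩ := key hm hr P M hM hl1' hgr' hov' y x hy.1 hx.2 h
      exact ⟨C, hC, hxC, hyC⟩
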